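/- For α ∈ (0,1) and a random variable μ(Z) with E[max(μ(Z),0)] < ∞, the infimum in inf_{η∈ℝ} { (1/α) E[(μ(Z) − η)_+] + η } is attained at η equal to the (1−α)-quantile of μ(Z). -/

import Mathlib

open MeasureTheory Filter Topology ENNReal

/-- The infimum in the dual CVaR formula is attained at the `(1−α)`-quantile of `μ(Z)`. -/
theorem cvar_dual_attained_at_quantile
    {Z : Type*} [MeasurableSpace Z] (P : Measure Z) [IsProbabilityMeasure P]
    (μ : Z → ℝ) (hμ : Measurable μ)
    (hint : Integrable (fun z => max (μ z) 0) P)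
    (α : ℝ) (hα : α ∈ Set.Ioo (0 : ℝ) 1) :
    (1 / α) * (∫ z, max (μ z - sInf {t : ℝ | ENNReal.ofReal (1 - α) ≤ P {z | μ z ≤ t}}) 0 ∂P)
        + sInf {t : ℝ | ENNReal.ofReal (1 - α) ≤ P {z | μ z ≤ t}}
      = ⨅ η : ℝ, ((1 / α) * ∫ z, max (μ z - η) 0 ∂P + η) := by
  obtain ⟨hα0, hα1⟩ := hα
  set S : Set ℝ := {t : ℝ | ENNReal.ofReal (1 - α) ≤ P {z | μ z ≤ t}} with hSdef
  set q : ℝ := sInf S with hqdef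
  have hmeas : ∀ t : ℝ, MeasurableSet {z : Z | μ z ≤ t} := fun t => hμ measurableSet_Iic
  -- S is an upper set
  have hup : ∀ {s t : ℝ}, s ∈ S → s ≤ t → t ∈ S := by
    intro s t hs hst
    exact le_trans hs (measure_mono fun z hz => le_trans hz hst)
  -- S is nonempty
  have hSne : S.Nonempty := by
    have h1 : Tendsto (fun n : ℕ => P {z | μ z ≤ (n : ℝ)}) atTop
        (𝓝 (P (⋃ n : ℕ, {z : Z | μ z ≤ (n : ℝ)}))) :=
      tendsto_measure_iUnion_atTop (fun a b hab z hz => by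
        simp only [Set.mem_setOf_eq] at hz ⊢; exact le_trans hz (Nat.cast_le.mpr hab))
    have hu : (⋃ n : ℕ, {z : Z | μ z ≤ (n : ℝ)}) = Set.univ := by
      ext z; simp only [Set.mem_iUnion, Set.mem_setOf_eq, Set.mem_univ, iff_true]
      exact exists_nat_ge (μ z)
    rw [hu, measure_univ] at h1
    have hlt : ENNReal.ofReal (1 - α) < 1 := by
      rw [← ENNReal.ofReal_one]
      exact (ENNReal.ofReal_lt_ofReal_iff_of_nonneg (by linarith)).2 (by linarith)
    obtain ⟨n, hn⟩ := (h1.eventually (eventually_gt_nhds hlt)).exists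
    exact ⟨n, hn.le⟩
  -- S is bounded below
  have hSbd : BddBelow S := by
    have h1 : Tendsto (fun n : ℕ => P {z | μ z ≤ -(n : ℝ)}) atTop
        (𝓝 (P (⋂ n : ℕ, {z : Z | μ z ≤ -(n : ℝ)}))) := by
      refine tendsto_measure_iInter_atTop (fun n => (hmeas _).nullMeasurableSet)
        (fun a b hab z hz => by
          simp only [Set.mem_setOf_eq] at hz ⊢
          exact le_trans hz (neg_le_neg (Nat.cast_le.mpr hab))) ⟨0, measure_ne_top _ _⟩
    have hu : (⋂ n : ℕ, {z : Z | μ z ≤ -(n : ℝ)}) = ∅ := by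
      ext z; simp only [Set.mem_iInter, Set.mem_setOf_eq, Set.mem_empty_iff_false, iff_false,
        not_forall, not_le]
      obtain ⟨n, hn⟩ := exists_nat_gt (-(μ z))
      exact ⟨n, by linarith⟩
    rw [hu, measure_empty] at h1
    have hpos : (0 : ℝ≥0∞) < ENNReal.ofReal (1 - α) := ENNReal.ofReal_pos.2 (by linarith)
    obtain ⟨n, hn⟩ := (h1.eventually (eventually_lt_nhds hpos)).exists
    refine ⟨-(n : ℝ), fun t ht => ?_⟩
    by_contra h
    push_neg at h
    exact absurd (le_trans ht (measure_mono fun z hz => le_trans hz h.le)) hn.not_ge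
  -- the quantile satisfies P {μ ≤ q} ≥ 1 - α
  have hqS : ENNReal.ofReal (1 - α) ≤ P {z | μ z ≤ q} := by
    have h1 : Tendsto (fun n : ℕ => P {z | μ z ≤ q + 1 / (n + 1)}) atTop
        (𝓝 (P (⋂ n : ℕ, {z : Z | μ z ≤ q + 1 / ((n : ℝ) + 1)}))) := by
      refine tendsto_measure_iInter_atTop (fun n => (hmeas _).nullMeasurableSet)
        (fun a b hab z hz => by
          simp only [Set.mem_setOf_eq] at hz ⊢
          have : 1 / ((b : ℝ) + 1) ≤ 1 / ((a : ℝ) + 1) := by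
            apply one_div_le_one_div_of_le (by positivity)
            exact_mod_cast add_le_add_left (Nat.cast_le.2 hab) 1
          linarith) ⟨0, measure_ne_top _ _⟩
    have hu : (⋂ n : ℕ, {z : Z | μ z ≤ q + 1 / ((n : ℝ) + 1)}) = {z : Z | μ z ≤ q} := by
      ext z
      simp only [Set.mem_iInter, Set.mem_setOf_eq]
      constructor
      · intro h
        by_contra hc
        push_neg at hc
        obtain ⟨n, hn⟩ := exists_nat_one_div_lt (show (0:ℝ) < μ z - q by linarith)
        exact absurd (h n) (by linarith)
      · intro h n
        have : (0:ℝ) < 1 / ((n : ℝ) + 1) := by positivity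
        linarith
    rw [hu] at h1
    refine ge_of_tendsto h1 (Eventually.of_forall fun n => ?_)
    have hmem : q + 1 / ((n : ℝ) + 1) ∈ S := by
      obtain ⟨t, htS, htlt⟩ := exists_lt_of_csInf_lt hSne
        (show sInf S < q + 1 / ((n : ℝ) + 1) from
          lt_add_of_pos_right _ (by positivity))
      exact hup htS htlt.le
    exact hmem
  -- P {μ < q} ≤ 1 - α
  have hqlt : P {z | μ z < q} ≤ ENNReal.ofReal (1 - α) := by
    have h1 : Tendsto (fun n : ℕ => P {z | μ z ≤ q - 1 / (n + 1)}) atTop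
        (𝓝 (P (⋃ n : ℕ, {z : Z | μ z ≤ q - 1 / ((n : ℝ) + 1)}))) := by
      refine tendsto_measure_iUnion_atTop (fun a b hab z hz => by
        simp only [Set.mem_setOf_eq] at hz ⊢
        have : 1 / ((b : ℝ) + 1) ≤ 1 / ((a : ℝ) + 1) := by
          apply one_div_le_one_div_of_le (by positivity)
          exact_mod_cast add_le_add_left (Nat.cast_le.2 hab) 1
        linarith)
    have hu : (⋃ n : ℕ, {z : Z | μ z ≤ q - 1 / ((n : ℝ) + 1)}) = {z : Z | μ z < q} := by
      ext z
      simp only [Set.mem_iUnion, Set.mem_setOf_eq]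
      constructor
      · rintro ⟨n, hn⟩
        have : (0:ℝ) < 1 / ((n : ℝ) + 1) := by positivity
        linarith
      · intro h
        obtain ⟨n, hn⟩ := exists_nat_one_div_lt (show (0:ℝ) < q - μ z by linarith)
        exact ⟨n, by linarith⟩
    rw [hu] at h1
    refine le_of_tendsto h1 (Eventually.of_forall fun n => ?_)
    have hnot : q - 1 / ((n : ℝ) + 1) ∉ S := by
      intro h
      have := csInf_le hSbd h
      rw [← hqdef] at this
      have hpos : (0:ℝ) < 1 / ((n : ℝ) + 1) := by positivity
      linarith
    exact (not_le.1 hnot).le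
  -- tail probabilities
  have hcgt : P {z | q < μ z} ≤ ENNReal.ofReal α := by
    have hc : {z : Z | q < μ z} = {z : Z | μ z ≤ q}ᶜ := by
      ext z; simp [not_le]
    rw [hc, measure_compl (hmeas q) (measure_ne_top _ _), measure_univ]
    calc (1 : ℝ≥0∞) - P {z | μ z ≤ q} ≤ 1 - ENNReal.ofReal (1 - α) :=
          tsub_le_tsub_left hqS 1
      _ = ENNReal.ofReal α := by
          rw [← ENNReal.ofReal_one, ← ENNReal.ofReal_sub _ (by linarith)]
          norm_num
  have hcge : ENNReal.ofReal α ≤ P {z | q ≤ μ z} := by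
    have hc : {z : Z | q ≤ μ z} = {z : Z | μ z < q}ᶜ := by
      ext z; simp [not_lt]
    have hm2 : MeasurableSet {z : Z | μ z < q} := hμ measurableSet_Iio
    rw [hc, measure_compl hm2 (measure_ne_top _ _), measure_univ]
    calc ENNReal.ofReal α = 1 - ENNReal.ofReal (1 - α) := by
          rw [← ENNReal.ofReal_one, ← ENNReal.ofReal_sub _ (by linarith)]
          norm_num
      _ ≤ 1 - P {z | μ z < q} := tsub_le_tsub_left hqlt 1
  have hpgt : (P {z | q < μ z}).toReal ≤ α :=
    ENNReal.toReal_le_of_le_ofReal hα0.le hcgt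
  have hpge : α ≤ (P {z | q ≤ μ z}).toReal :=
    (ENNReal.ofReal_le_iff_le_toReal (measure_ne_top _ _)).1 hcge
  -- integrability
  have hint' : ∀ η : ℝ, Integrable (fun z => max (μ z - η) 0) P := by
    intro η
    refine (hint.add (integrable_const |η|)).mono'
      ((hμ.sub measurable_const).max measurable_const).aestronglyMeasurable ?_
    filter_upwards with z
    rw [Real.norm_eq_abs, abs_of_nonneg (le_max_right _ _), Pi.add_apply]
    refine max_le ?_ (add_nonneg (le_max_right _ _) (abs_nonneg _))
    have h1 := le_max_left (μ z) 0
    have h2 := neg_abs_le η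
    linarith
  -- main inequality: f q ≤ f η for all η
  have key : ∀ η : ℝ, (1 / α) * ∫ z, max (μ z - q) 0 ∂P + q
      ≤ (1 / α) * ∫ z, max (μ z - η) 0 ∂P + η := by
    intro η
    rcases le_or_gt q η with hη | hη
    · -- η ≥ q : use (μ-q)_+ ≤ (μ-η)_+ + (η-q)·1{μ>q}
      have hind : Integrable (fun z => Set.indicator {z : Z | q < μ z} (fun _ => η - q) z) P :=
        (integrable_const (η - q)).indicator (hμ measurableSet_Ioi)
      have hptw : ∀ z, max (μ z - q) 0 ≤ max (μ z - η) 0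
          + Set.indicator {z : Z | q < μ z} (fun _ => η - q) z := by
        intro z
        rcases lt_or_ge q (μ z) with h | h
        · rw [Set.indicator_of_mem (show z ∈ {z : Z | q < μ z} from h)]
          rcases le_or_gt (μ z) η with h' | h'
          · rw [max_eq_left (by linarith), max_eq_right (by linarith)]; linarith
          · rw [max_eq_left (by linarith), max_eq_left (by linarith)]; linarith
        · rw [Set.indicator_of_notMem (show z ∉ {z : Z | q < μ z} from not_lt.2 h),
            max_eq_right (by linarith)]
          positivity
      have hI : ∫ z, max (μ z - q) 0 ∂P ≤ ∫ z, max (μ z - η) 0 ∂P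
          + (η - q) * (P {z | q < μ z}).toReal := by
        have hmi : MeasurableSet {z : Z | q < μ z} := hμ measurableSet_Ioi
        have := integral_mono (hint' q) ((hint' η).add hind) hptw
        simp only [Pi.add_apply] at this
        rwa [integral_add (hint' η) hind, integral_indicator_const _ hmi,
          smul_eq_mul, mul_comm] at this
      have hαpos : (0:ℝ) < 1 / α := by positivity
      have h2 : (1 / α) * ((η - q) * (P {z | q < μ z}).toReal) ≤ η - q := by
        rw [one_div, ← mul_assoc, mul_comm α⁻¹, mul_assoc]
        calc (η - q) * (α⁻¹ * (P {z | q < μ z}).toReal) ≤ (η - q) * (α⁻¹ * α) := by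
              apply mul_le_mul_of_nonneg_left _ (by linarith)
              exact mul_le_mul_of_nonneg_left hpgt (by positivity)
          _ = η - q := by field_simp
      nlinarith [mul_le_mul_of_nonneg_left hI hαpos.le]
    · -- η < q : use (μ-η)_+ ≥ (μ-q)_+ + (q-η)·1{μ≥q}
      have hind : Integrable (fun z => Set.indicator {z : Z | q ≤ μ z} (fun _ => q - η) z) P :=
        (integrable_const (q - η)).indicator (hμ measurableSet_Ici)
      have hptw : ∀ z, max (μ z - q) 0
          + Set.indicator {z : Z | q ≤ μ z} (fun _ => q - η) z ≤ max (μ z - η) 0 := by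
        intro z
        rcases le_or_gt q (μ z) with h | h
        · rw [Set.indicator_of_mem (show z ∈ {z : Z | q ≤ μ z} from h), max_eq_left (by linarith),
            max_eq_left (by linarith)]
          linarith
        · rw [Set.indicator_of_notMem (show z ∉ {z : Z | q ≤ μ z} from not_le.2 h),
            max_eq_right (by linarith)]
          simp [le_max_right]
      have hI : ∫ z, max (μ z - q) 0 ∂P + (q - η) * (P {z | q ≤ μ z}).toReal
          ≤ ∫ z, max (μ z - η) 0 ∂P := by
        have hmi : MeasurableSet {z : Z | q ≤ μ z} := hμ measurableSet_Ici
        have := integral_mono ((hint' q).add hind) (hint' η) hptw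
        simp only [Pi.add_apply] at this
        rwa [integral_add (hint' q) hind, integral_indicator_const _ hmi,
          smul_eq_mul, mul_comm] at this
      have hαpos : (0:ℝ) < 1 / α := by positivity
      have h2 : q - η ≤ (1 / α) * ((q - η) * (P {z | q ≤ μ z}).toReal) := by
        rw [one_div, ← mul_assoc, mul_comm α⁻¹, mul_assoc]
        calc q - η = (q - η) * (α⁻¹ * α) := by field_simp
          _ ≤ (q - η) * (α⁻¹ * (P {z | q ≤ μ z}).toReal) := by
              apply mul_le_mul_of_nonneg_left _ (by linarith)
              exact mul_le_mul_of_nonneg_left hpge (by positivity)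
      nlinarith [mul_le_mul_of_nonneg_left hI hαpos.le]
  refine le_antisymm (le_ciInf key) ?_
  exact ciInf_le ⟨_, Set.forall_mem_range.2 key⟩ q
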